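/- Let a, b, n, R be positive real constants and consider the van der Waals pressure function 𝒜_W(T, V) = nRT/(V − bn) − a n²/V² on the domain {T > 0, V > bn}. Then the system of equations ∂𝒜_W/∂V = 0 and ∂²𝒜_W/∂V² = 0 has exactly one solution in this domain, namely the critical point V_c = 3bn, T_c = 8a/(27bR), and at this point the pressure takes the critical value 𝒜_W(T_c, V_c) = a/(27b²). -/

import Mathlib

/-- The van der Waals pressure `𝒜_W(T,V) = nRT/(V−bn) − an²/V²` has exactly one critical
point in the physical domain `T > 0`, `V > bn`, where both `∂𝒜_W/∂V` and `∂²𝒜_W/∂V²`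
vanish: it is `V_c = 3bn`, `T_c = 8a/(27bR)`, and there the pressure takes the critical value
`𝒜_W(T_c,V_c) = a/(27b²)`. -/
theorem stmt_16 (a b n R : ℝ) (ha : 0 < a) (hb : 0 < b) (hn : 0 < n) (hR : 0 < R)
    (A : ℝ → ℝ → ℝ)
    (hA : ∀ T V, A T V = n * R * T / (V - b * n) - a * n^2 / V^2) :
    (∀ T V : ℝ, 0 < T → b * n < V →
      ((deriv (fun v => A T v) V = 0 ∧ deriv (deriv (fun v => A T v)) V = 0)
        ↔ (T = 8 * a / (27 * b * R) ∧ V = 3 * b * n))) ∧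
    A (8 * a / (27 * b * R)) (3 * b * n) = a / (27 * b^2) := by
  have hbn : 0 < b * n := mul_pos hb hn
  constructor
  · intro T V hT hV
    have hV0 : (0:ℝ) < V := hbn.trans hV
    have hfun : (fun v => A T v) = fun v => n*R*T/(v - b*n) - a*n^2/v^2 :=
      funext fun v => hA T v
    have key : ∀ v : ℝ, b*n < v →
        HasDerivAt (fun v => A T v) (-(n*R*T)/(v-b*n)^2 + 2*a*n^2/v^3) v := by
      intro v hv
      have hv0 : (0:ℝ) < v := hbn.trans hv
      have hs : v - b*n ≠ 0 := sub_ne_zero.2 (ne_of_gt hv)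
      have h1 : HasDerivAt (fun x : ℝ => n*R*T/(x-b*n)) (-(n*R*T)/(v-b*n)^2) v := by
        have h := (hasDerivAt_const v (n*R*T)).div ((hasDerivAt_id' v).sub_const (b*n)) hs
        refine h.congr_deriv ?_
        field_simp
        ring
      have h2 : HasDerivAt (fun x : ℝ => a*n^2/x^2) (-(2*a*n^2)/v^3) v := by
        have h := (hasDerivAt_const v (a*n^2)).div (hasDerivAt_pow 2 v) (pow_ne_zero 2 hv0.ne')
        refine h.congr_deriv ?_
        field_simp
        ring
      rw [hfun]
      refine (h1.sub h2).congr_deriv ?_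
      ring
    have hmem : {v : ℝ | b*n < v} ∈ nhds V := isOpen_Ioi.mem_nhds hV
    have hev : deriv (fun v => A T v)
        =ᶠ[nhds V] (fun v => -(n*R*T)/(v-b*n)^2 + 2*a*n^2/v^3) :=
      Filter.eventually_of_mem hmem fun v hv => (key v hv).deriv
    have hd1 : deriv (fun v => A T v) V = -(n*R*T)/(V-b*n)^2 + 2*a*n^2/V^3 := (key V hV).deriv
    have hs : V - b*n ≠ 0 := sub_ne_zero.2 (ne_of_gt hV)
    have hd2calc : HasDerivAt (fun v : ℝ => -(n*R*T)/(v-b*n)^2 + 2*a*n^2/v^3)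
        (2*(n*R*T)/(V-b*n)^3 - 6*a*n^2/V^4) V := by
      have h1 : HasDerivAt (fun x : ℝ => -(n*R*T)/(x-b*n)^2) (2*(n*R*T)/(V-b*n)^3) V := by
        have hpow : HasDerivAt (fun x : ℝ => (x - b*n)^2) (2*(V-b*n)) V := by
          have h := ((hasDerivAt_id V).sub_const (b*n)).pow 2
          refine h.congr_deriv ?_
          simp
        have h := (hasDerivAt_const V (-(n*R*T))).div hpow (pow_ne_zero 2 hs)
        refine h.congr_deriv ?_
        field_simp
        ring
      have h2 : HasDerivAt (fun x : ℝ => 2*a*n^2/x^3) (-(6*a*n^2)/V^4) V := by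
        have h := (hasDerivAt_const V (2*a*n^2)).div (hasDerivAt_pow 3 V) (pow_ne_zero 3 hV0.ne')
        refine h.congr_deriv ?_
        field_simp
        ring
      refine (h1.add h2).congr_deriv ?_
      ring
    have hd2 : deriv (deriv (fun v => A T v)) V = 2*(n*R*T)/(V-b*n)^3 - 6*a*n^2/V^4 := by
      rw [hev.deriv_eq, hd2calc.deriv]
    rw [hd1, hd2]
    have hspos : 0 < V - b*n := sub_pos.2 hV
    constructor
    · rintro ⟨h1, h2⟩
      have e1 : n*R*T*V^3 = 2*a*n^2*(V-b*n)^2 := by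
        rw [neg_div, neg_add_eq_sub, sub_eq_zero, div_eq_div_iff (pow_ne_zero 3 hV0.ne') (pow_ne_zero 2 hs)] at h1
        nlinarith [h1]
      have e2 : 2*(n*R*T)*V^4 = 6*a*n^2*(V-b*n)^3 := by
        rw [sub_eq_zero, div_eq_div_iff (pow_ne_zero 3 hs) (pow_ne_zero 4 hV0.ne')] at h2
        nlinarith [h2]
      have hVeq : V = 3*b*n := by
        have e4 : a*n^2*(V-b*n)^2 * (6*(V-b*n) - 4*V) = 0 := by
          linear_combination -e2 + 2*V*e1
        have hne : a*n^2*(V-b*n)^2 ≠ 0 := by positivity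
        have h5 := (mul_eq_zero.mp e4).resolve_left hne
        linarith
      refine ⟨?_, hVeq⟩
      rw [hVeq] at e1
      rw [eq_div_iff (by positivity : 27*b*R ≠ 0)]
      have hcan : b^2*n^4 ≠ 0 := by positivity
      apply mul_left_cancel₀ hcan
      linear_combination e1
    · rintro ⟨hTeq, hVeq⟩
      subst hTeq hVeq
      rw [show (3*b*n - b*n : ℝ) = 2*b*n by ring]
      constructor <;> · field_simp; ring
  · rw [hA, show (3*b*n - b*n : ℝ) = 2*b*n by ring]
    field_simp
    ring
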